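/- arXiv:1506.02298 — 2 statements merged into one kernel-verified Lean document; each statement's English description precedes it below -/
import Mathlib

section
/- Under Assumptions 1 and 2, if 0 < p₀({M}) < 1 and q({M}) = 0, then for every 0 ≤ a < M the restricted measures (p_i)_{[0,a]} converge in total variation to (p*)_{[0,a]}; as a consequence, (p_i)_{i≥0} converges weakly to p*. -/
open MeasureTheory Set Filter

/-- Selective advantage `s(x,u) = w(x,u) / ∫ w(y,u) u(dy)` if the mean fitness is
positive, and `1` otherwise. -/
noncomputable def sel (w : ℝ → MeasureTheory.Measure ℝ → ℝ)
    (u : MeasureTheory.Measure ℝ) (x : ℝ) : ℝ :=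
  if 0 < ∫ y, w y u ∂u then w x u / ∫ y, w y u ∂u else 1

/-- The sequence of type distributions:
`p_i(dx) = (1-β) s(x,p_{i-1}) p_{i-1}(dx) + β q(dx)`. -/
noncomputable def evol (w : ℝ → MeasureTheory.Measure ℝ → ℝ) (β : ℝ)
    (q p₀ : MeasureTheory.Measure ℝ) : ℕ → MeasureTheory.Measure ℝ
  | 0 => p₀
  | i + 1 =>
      ENNReal.ofReal (1 - β) •
          ((evol w β q p₀ i).withDensity fun x =>
            ENNReal.ofReal (sel w (evol w β q p₀ i) x))
        + ENNReal.ofReal β • q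

/-- Convergence in total variation (uniform convergence over all measurable sets). -/
def TendstoTV (p : ℕ → MeasureTheory.Measure ℝ) (μ : MeasureTheory.Measure ℝ) : Prop :=
  ∀ ε : ℝ, 0 < ε → ∃ N : ℕ, ∀ i ≥ N, ∀ A : Set ℝ, MeasurableSet A →
    |((p i) A).toReal - (μ A).toReal| < ε

/-- Weak convergence of measures (tested against bounded continuous functions). -/
def TendstoWeak (p : ℕ → MeasureTheory.Measure ℝ) (μ : MeasureTheory.Measure ℝ) : Prop :=
  ∀ f : BoundedContinuousFunction ℝ ℝ,
    Filter.Tendsto (fun i => ∫ x, f x ∂(p i)) Filter.atTop (nhds (∫ x, f x ∂μ))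

/-- Assumption 1: if `v` restricted to `[0,M)` is a component of `u` restricted to `[0,M)`,
then `s(·,u) ≥ s(·,v)` on `[0,M]`. -/
def Assumption1 (M : ℝ) (w : ℝ → MeasureTheory.Measure ℝ → ℝ) : Prop :=
  ∀ u v : MeasureTheory.Measure ℝ,
    IsProbabilityMeasure u → IsProbabilityMeasure v →
    u ((Set.Icc 0 M)ᶜ) = 0 → v ((Set.Icc 0 M)ᶜ) = 0 →
    v.restrict (Set.Ico 0 M) ≤ u.restrict (Set.Ico 0 M) →
    ∀ x ∈ Set.Icc (0:ℝ) M, sel w v x ≤ sel w u x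

/-- Assumption 2: for every `0 ≤ a < M` and `0 < ε < 1` there is `c(a,ε) > 1` such that
`s(M,u) ≥ c(a,ε) s(M,v)` whenever `v_{[0,M)} ≺ u_{[0,M)}` and `D_u(a) ≥ D_v(a) + ε`. -/
def Assumption2 (M : ℝ) (w : ℝ → MeasureTheory.Measure ℝ → ℝ) : Prop :=
  ∀ a : ℝ, 0 ≤ a → a < M → ∀ ε : ℝ, 0 < ε → ε < 1 → ∃ c : ℝ, 1 < c ∧
    ∀ u v : MeasureTheory.Measure ℝ,
      IsProbabilityMeasure u → IsProbabilityMeasure v →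
      u ((Set.Icc 0 M)ᶜ) = 0 → v ((Set.Icc 0 M)ᶜ) = 0 →
      v.restrict (Set.Ico 0 M) ≤ u.restrict (Set.Ico 0 M) →
      (v (Set.Icc 0 a)).toReal + ε ≤ (u (Set.Icc 0 a)).toReal →
      c * sel w v M ≤ sel w u M



lemma sel_nonneg {w : ℝ → Measure ℝ → ℝ} (hw : ∀ x u, 0 ≤ w x u) (u : Measure ℝ) (x : ℝ) :
    0 ≤ sel w u x := by
  unfold sel; split
  · exact div_nonneg (hw x u) (le_of_lt (by assumption))
  · exact zero_le_one

lemma lintegral_sel {w : ℝ → Measure ℝ → ℝ} (hw : ∀ x u, 0 ≤ w x u)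
    (hwm : ∀ u, Measurable fun x => w x u) (u : Measure ℝ) [IsProbabilityMeasure u] :
    ∫⁻ x, ENNReal.ofReal (sel w u x) ∂u = 1 := by
  unfold sel
  by_cases h : 0 < ∫ y, w y u ∂u
  · have hint : Integrable (fun y => w y u) u := by
      by_contra hni
      rw [integral_undef hni] at h
      exact lt_irrefl _ h
    simp only [if_pos h]
    have : ∀ x : ℝ, ENNReal.ofReal (w x u / ∫ y, w y u ∂u)
        = ENNReal.ofReal (w x u) * (ENNReal.ofReal (∫ y, w y u ∂u))⁻¹ := by
      intro x
      rw [div_eq_mul_inv, ENNReal.ofReal_mul (hw x u), ENNReal.ofReal_inv_of_pos h]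
    simp only [this]
    rw [lintegral_mul_const'' _ ((hwm u).ennreal_ofReal.aemeasurable)]
    rw [← ofReal_integral_eq_lintegral_ofReal hint (Filter.Eventually.of_forall (fun x => hw x u))]
    rw [ENNReal.mul_inv_cancel (by simp [ENNReal.ofReal_pos.mpr h, (ENNReal.ofReal_pos.mpr h).ne']) ENNReal.ofReal_ne_top]
  · simp only [if_neg h]
    simp

lemma evol_prob {w : ℝ → Measure ℝ → ℝ} (hw : ∀ x u, 0 ≤ w x u)
    (hwm : ∀ u, Measurable fun x => w x u) {β : ℝ} (hβ : β ∈ Set.Ioo (0:ℝ) 1)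
    (q p₀ : Measure ℝ) [IsProbabilityMeasure q] [IsProbabilityMeasure p₀] :
    ∀ i, IsProbabilityMeasure (evol w β q p₀ i) := by
  intro i
  induction i with
  | zero => rw [evol]; infer_instance
  | succ i ih =>
    constructor
    rw [evol]
    have h1 : ((evol w β q p₀ i).withDensity fun x =>
        ENNReal.ofReal (sel w (evol w β q p₀ i) x)) univ = 1 := by
      rw [withDensity_apply _ MeasurableSet.univ, Measure.restrict_univ]
      exact lintegral_sel hw hwm _
    simp only [Measure.add_apply, Measure.smul_apply, smul_eq_mul, h1, measure_univ, mul_one]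
    rw [← ENNReal.ofReal_add (by linarith [hβ.2]) (le_of_lt hβ.1)]
    norm_num

lemma evol_supp {M : ℝ} {w : ℝ → Measure ℝ → ℝ} {β : ℝ}
    {q p₀ : Measure ℝ} (hq : q ((Set.Icc 0 M)ᶜ) = 0) (hp₀ : p₀ ((Set.Icc 0 M)ᶜ) = 0) :
    ∀ i, (evol w β q p₀ i) ((Set.Icc 0 M)ᶜ) = 0 := by
  intro i
  induction i with
  | zero => simpa [evol] using hp₀
  | succ i ih =>
    rw [evol]
    simp only [Measure.add_apply, Measure.smul_apply, smul_eq_mul]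
    rw [withDensity_apply _ (measurableSet_Icc.compl), hq]
    rw [Measure.restrict_eq_zero.mpr ih]
    simp

lemma sel_measurable {w : ℝ → Measure ℝ → ℝ} (hwm : ∀ u, Measurable fun x => w x u)
    (u : Measure ℝ) : Measurable (sel w u) := by
  unfold sel
  by_cases h : 0 < ∫ y, w y u ∂u
  · simp only [if_pos h]; exact (hwm u).div_const _
  · simp only [if_neg h]; exact measurable_const

lemma wd_mono (M : ℝ) (w : ℝ → Measure ℝ → ℝ) (hwm : ∀ u, Measurable fun x => w x u)
    (hA1 : Assumption1 M w)
    (u v : Measure ℝ) [IsProbabilityMeasure u] [IsProbabilityMeasure v]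
    (hu : u ((Set.Icc 0 M)ᶜ) = 0) (hv : v ((Set.Icc 0 M)ᶜ) = 0)
    (hle : v.restrict (Set.Ico 0 M) ≤ u.restrict (Set.Ico 0 M)) :
    (v.withDensity fun x => ENNReal.ofReal (sel w v x)).restrict (Set.Ico 0 M) ≤
    (u.withDensity fun x => ENNReal.ofReal (sel w u x)).restrict (Set.Ico 0 M) := by
  rw [Measure.le_iff]
  intro s hs
  rw [Measure.restrict_apply hs, Measure.restrict_apply hs,
    withDensity_apply _ (hs.inter measurableSet_Ico),
    withDensity_apply _ (hs.inter measurableSet_Ico)]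
  calc ∫⁻ x in s ∩ Set.Ico 0 M, ENNReal.ofReal (sel w v x) ∂v
      ≤ ∫⁻ x in s ∩ Set.Ico 0 M, ENNReal.ofReal (sel w u x) ∂v := by
        apply setLIntegral_mono ((sel_measurable hwm u).ennreal_ofReal)
        intro x hx
        exact ENNReal.ofReal_le_ofReal (hA1 u v ‹_› ‹_› hu hv hle x
          (Set.Ico_subset_Icc_self hx.2))
    _ ≤ ∫⁻ x in s ∩ Set.Ico 0 M, ENNReal.ofReal (sel w u x) ∂u := by
        rw [← Measure.restrict_restrict hs, ← Measure.restrict_restrict hs]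
        exact lintegral_mono' (Measure.restrict_mono le_rfl hle) le_rfl

section Main

variable {M : ℝ} {w : ℝ → Measure ℝ → ℝ} {β : ℝ} {q p₀ : Measure ℝ}

lemma coupling (hM : 0 < M) (hβ : β ∈ Set.Ioo (0:ℝ) 1)
    [IsProbabilityMeasure q] [IsProbabilityMeasure p₀]
    (hq : q ((Set.Icc 0 M)ᶜ) = 0) (hp₀ : p₀ ((Set.Icc 0 M)ᶜ) = 0)
    (hw : ∀ x u, 0 ≤ w x u) (hwm : ∀ u, Measurable fun x => w x u)
    (hA1 : Assumption1 M w) :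
    ∀ i, (evol w β q (Measure.dirac M) i).restrict (Set.Ico 0 M) ≤
      (evol w β q p₀ i).restrict (Set.Ico 0 M) := by
  have hdsupp : (Measure.dirac M) ((Set.Icc 0 M)ᶜ) = 0 := by
    rw [Measure.dirac_apply' _ measurableSet_Icc.compl]
    simp [Set.indicator, Set.left_mem_Icc, hM.le]
  intro i
  induction i with
  | zero =>
    rw [evol, evol, Measure.le_iff]
    intro s hs
    rw [Measure.restrict_apply hs, Measure.dirac_apply' _ (hs.inter measurableSet_Ico)]
    have : M ∉ s ∩ Set.Ico 0 M := fun h => lt_irrefl M h.2.2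
    simp [Set.indicator_of_notMem this]
  | succ i ih =>
    have hp := evol_prob hw hwm hβ q p₀
    have hph := evol_prob hw hwm hβ q (Measure.dirac M)
    have := hp i; have := hph i
    rw [evol, evol]
    rw [Measure.restrict_add, Measure.restrict_add,
      Measure.restrict_smul, Measure.restrict_smul, Measure.restrict_smul]
    refine Measure.le_iff'.mpr fun s => ?_
    simp only [Measure.coe_add, Pi.add_apply, Measure.smul_apply, smul_eq_mul]
    exact add_le_add (mul_le_mul_right (Measure.le_iff'.mp
      (wd_mono M w hwm hA1 _ _ (evol_supp hq hp₀ i) (evol_supp hq hdsupp i) ih) s) _) le_rfl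

lemma sel_dirac_M (hM : 0 ≤ M) (hwm : ∀ u, Measurable fun x => w x u) :
    sel w (Measure.dirac M) M = 1 := by
  unfold sel
  split
  · rw [integral_dirac] at *
    rw [div_self (by positivity)]
  · rfl

lemma atom_rec (hqM : q ({M} : Set ℝ) = 0) (i : ℕ) :
    (evol w β q p₀ (i+1)) ({M} : Set ℝ) = ENNReal.ofReal (1-β) *
      (ENNReal.ofReal (sel w (evol w β q p₀ i) M) * (evol w β q p₀ i) ({M} : Set ℝ)) := by
  rw [evol]
  simp only [Measure.coe_add, Pi.add_apply, Measure.smul_apply, smul_eq_mul]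
  rw [hqM, mul_zero, add_zero, withDensity_apply _ (measurableSet_singleton M),
    lintegral_singleton]

lemma dirac_supp (hM : 0 ≤ M) : (Measure.dirac M) ((Set.Icc 0 M)ᶜ) = 0 := by
  rw [Measure.dirac_apply' _ measurableSet_Icc.compl]
  simp [Set.indicator, Set.left_mem_Icc, hM]

lemma eq_dirac (u : Measure ℝ) [IsProbabilityMeasure u]
    (hu : u ((Set.Icc 0 M)ᶜ) = 0) (h0 : u (Set.Ico 0 M) = 0) :
    u = Measure.dirac M := by
  have hcompl : u (({M} : Set ℝ)ᶜ) = 0 := by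
    have hsub : ({M} : Set ℝ)ᶜ ⊆ (Set.Icc 0 M)ᶜ ∪ Set.Ico 0 M := by
      intro x hx
      by_cases hxI : x ∈ Set.Icc 0 M
      · exact Or.inr ⟨hxI.1, lt_of_le_of_ne hxI.2 hx⟩
      · exact Or.inl hxI
    exact le_antisymm (le_trans (measure_mono hsub)
      (le_trans (measure_union_le _ _) (by rw [hu, h0]; simp))) (zero_le)
  have hM1 : u ({M} : Set ℝ) = 1 := by
    have := measure_add_measure_compl (μ := u) (measurableSet_singleton M)
    rw [hcompl, add_zero, measure_univ] at this
    exact this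
  ext s hs
  rw [Measure.dirac_apply' _ hs]
  by_cases hMs : M ∈ s
  · rw [Set.indicator_of_mem hMs]
    refine le_antisymm prob_le_one ?_
    calc (1:ENNReal) = u {M} := hM1.symm
      _ ≤ u s := measure_mono (Set.singleton_subset_iff.mpr hMs)
  · rw [Set.indicator_of_notMem hMs]
    exact le_antisymm (le_trans (measure_mono
      (Set.subset_compl_singleton_iff.mpr hMs)) hcompl.le) (zero_le)

lemma sel_lower (hM : 0 < M) (hwm : ∀ u, Measurable fun x => w x u)
    {a ε c : ℝ} (ha : 0 ≤ a) (haM : a < M)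
    (hc : ∀ u v : MeasureTheory.Measure ℝ,
      IsProbabilityMeasure u → IsProbabilityMeasure v →
      u ((Set.Icc 0 M)ᶜ) = 0 → v ((Set.Icc 0 M)ᶜ) = 0 →
      v.restrict (Set.Ico 0 M) ≤ u.restrict (Set.Ico 0 M) →
      (v (Set.Icc 0 a)).toReal + ε ≤ (u (Set.Icc 0 a)).toReal →
      c * sel w v M ≤ sel w u M)
    (u : Measure ℝ) [IsProbabilityMeasure u] (hu : u ((Set.Icc 0 M)ᶜ) = 0)
    (hmass : ε ≤ (u (Set.Icc 0 a)).toReal) : c ≤ sel w u M := by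
  have hd0 : (Measure.dirac M) (Set.Icc 0 a) = 0 := by
    rw [Measure.dirac_apply' _ measurableSet_Icc]
    simp [Set.indicator, not_le.mpr haM]
  have hres : (Measure.dirac M).restrict (Set.Ico 0 M) ≤ u.restrict (Set.Ico 0 M) := by
    rw [Measure.restrict_eq_zero.mpr (by
      rw [Measure.dirac_apply' _ measurableSet_Ico]
      simp [Set.indicator])]
    exact Measure.zero_le _
  have := hc u (Measure.dirac M) inferInstance inferInstance hu (dirac_supp hM.le) hres
    (by rw [hd0]; simpa using hmass)
  rwa [sel_dirac_M (M := M) (w := w) hM.le hwm, mul_one] at this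

lemma sel_M_pos (hM : 0 < M) (hwm : ∀ u, Measurable fun x => w x u)
    (hA2 : Assumption2 M w)
    (u : Measure ℝ) [IsProbabilityMeasure u] (hu : u ((Set.Icc 0 M)ᶜ) = 0) :
    0 < sel w u M := by
  by_cases h0 : u (Set.Ico 0 M) = 0
  · rw [eq_dirac u hu h0, sel_dirac_M (M := M) (w := w) hM.le hwm]
    norm_num
  · have hcover : Set.Ico 0 M ⊆ ⋃ n : ℕ, Set.Icc (0:ℝ) (M - M/(n+1)) := by
      intro x hx
      obtain ⟨n, hn⟩ := exists_nat_gt (M / (M - x))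
      refine Set.mem_iUnion.mpr ⟨n, hx.1, ?_⟩
      have hMx : 0 < M - x := by linarith [hx.2]
      have hn1 : M / (M - x) < n + 1 := by linarith
      have : M / (n+1) < M - x := by
        rw [div_lt_iff₀ (by positivity)] at hn1 ⊢
        · nlinarith
      linarith
    obtain ⟨n, hn⟩ : ∃ n : ℕ, u (Set.Icc (0:ℝ) (M - M/(n+1))) ≠ 0 := by
      by_contra hall
      push_neg at hall
      exact h0 (le_antisymm (le_trans (measure_mono hcover)
        (le_of_eq (measure_iUnion_null hall))) (zero_le))
    set a : ℝ := M - M/(n+1) with ha_def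
    have haM : a < M := by
      have : 0 < M / (n+1) := by positivity
      simp only [ha_def]; linarith
    have ha0 : 0 ≤ a := by
      have h1 : M / ((n:ℝ)+1) ≤ M / 1 := by
        apply div_le_div_of_nonneg_left hM.le one_pos
        push_cast; linarith [Nat.cast_nonneg (α := ℝ) n]
      simp only [ha_def]; rw [div_one] at h1; linarith
    have htR : 0 < (u (Set.Icc 0 a)).toReal :=
      ENNReal.toReal_pos hn (measure_ne_top u _)
    set ε : ℝ := min ((u (Set.Icc 0 a)).toReal) (1/2) with hε_def
    obtain ⟨c, hc1, hc⟩ := hA2 a ha0 haM ε (lt_min htR (by norm_num))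
      (lt_of_le_of_lt (min_le_right _ _) (by norm_num))
    exact lt_of_lt_of_le (by linarith)
      (sel_lower hM hwm ha0 haM hc u hu (min_le_left _ _))

lemma supp_Icc_one (hM : 0 ≤ M) (u : Measure ℝ) [IsProbabilityMeasure u]
    (hu : u ((Set.Icc 0 M)ᶜ) = 0) : u (Set.Icc 0 M) = 1 := by
  have := measure_add_measure_compl (μ := u) (measurableSet_Icc (a := (0:ℝ)) (b := M))
  rw [hu, add_zero, measure_univ] at this
  exact this

lemma atom_toReal (hM : 0 ≤ M) (u : Measure ℝ) [IsProbabilityMeasure u]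
    (hu : u ((Set.Icc 0 M)ᶜ) = 0) :
    (u ({M} : Set ℝ)).toReal = 1 - (u (Set.Ico 0 M)).toReal := by
  have hsplit : u (Set.Ico 0 M) + u ({M} : Set ℝ) = 1 := by
    rw [← measure_union (by simp [Set.disjoint_singleton_right]) (measurableSet_singleton M),
      Set.Ico_union_right hM, supp_Icc_one hM u hu]
  have h1 : (u (Set.Ico 0 M)).toReal + (u ({M} : Set ℝ)).toReal = 1 := by
    rw [← ENNReal.toReal_add (measure_ne_top u _) (measure_ne_top u _), hsplit]
    simp
  linarith

lemma gap_to_zero (hM : 0 < M) (hβ : β ∈ Set.Ioo (0:ℝ) 1)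
    [IsProbabilityMeasure q] [IsProbabilityMeasure p₀]
    (hq : q ((Set.Icc 0 M)ᶜ) = 0) (hp₀ : p₀ ((Set.Icc 0 M)ᶜ) = 0)
    (hw : ∀ x u, 0 ≤ w x u) (hwm : ∀ u, Measurable fun x => w x u)
    (hA1 : Assumption1 M w) (hA2 : Assumption2 M w)
    (h0M : 0 < p₀ ({M} : Set ℝ)) (hqM : q ({M} : Set ℝ) = 0)
    {a : ℝ} (ha : 0 ≤ a) (haM : a < M) {ε : ℝ} (hε0 : 0 < ε) (hε1 : ε < 1) :
    ∃ N, ∀ i ≥ N,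
      ((evol w β q p₀ i) (Set.Icc 0 a)).toReal
        < ((evol w β q (Measure.dirac M) i) (Set.Icc 0 a)).toReal + ε := by
  by_contra hcon
  push_neg at hcon
  set p : ℕ → Measure ℝ := evol w β q p₀ with hp_def
  set ph : ℕ → Measure ℝ := evol w β q (Measure.dirac M) with hph_def
  have hprob : ∀ i, IsProbabilityMeasure (p i) := evol_prob hw hwm hβ q p₀
  have hprobh : ∀ i, IsProbabilityMeasure (ph i) := evol_prob hw hwm hβ q (Measure.dirac M)
  have hsupp : ∀ i, (p i) ((Set.Icc 0 M)ᶜ) = 0 := evol_supp hq hp₀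
  have hsupph : ∀ i, (ph i) ((Set.Icc 0 M)ᶜ) = 0 := evol_supp hq (dirac_supp hM.le)
  have hcpl : ∀ i, (ph i).restrict (Set.Ico 0 M) ≤ (p i).restrict (Set.Ico 0 M) :=
    coupling hM hβ hq hp₀ hw hwm hA1
  obtain ⟨c, hc1, hc⟩ := hA2 a ha haM ε hε0 hε1
  set x : ℕ → ℝ := fun i => ((p i) ({M} : Set ℝ)).toReal with hx_def
  set y : ℕ → ℝ := fun i => ((ph i) ({M} : Set ℝ)).toReal with hy_def
  set s : ℕ → ℝ := fun i => sel w (p i) M with hs_def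
  set t : ℕ → ℝ := fun i => sel w (ph i) M with ht_def
  have hspos : ∀ i, 0 < s i := fun i => by
    have := hprob i; exact sel_M_pos hM hwm hA2 (p i) (hsupp i)
  have htpos : ∀ i, 0 < t i := fun i => by
    have := hprobh i; exact sel_M_pos hM hwm hA2 (ph i) (hsupph i)
  have hts : ∀ i, t i ≤ s i := fun i => by
    have := hprob i; have := hprobh i
    exact hA1 (p i) (ph i) (hprob i) (hprobh i) (hsupp i) (hsupph i) (hcpl i)
      M (Set.right_mem_Icc.mpr hM.le)
  have hxrec : ∀ i, x (i+1) = (1-β) * (s i * x i) := fun i => by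
    have := hprob i
    simp only [hx_def, hp_def, atom_rec hqM i, ENNReal.toReal_mul,
      ENNReal.toReal_ofReal (by linarith [hβ.2] : (0:ℝ) ≤ 1 - β),
      ENNReal.toReal_ofReal (sel_nonneg hw (p i) M)]
    rw [ENNReal.toReal_ofReal (sel_nonneg hw _ M)]
  have hyrec : ∀ i, y (i+1) = (1-β) * (t i * y i) := fun i => by
    have := hprobh i
    simp only [hy_def, hph_def, atom_rec hqM i, ENNReal.toReal_mul,
      ENNReal.toReal_ofReal (by linarith [hβ.2] : (0:ℝ) ≤ 1 - β),
      ENNReal.toReal_ofReal (sel_nonneg hw (ph i) M)]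
    rw [ENNReal.toReal_ofReal (sel_nonneg hw _ M)]
  have hβ1 : 0 < 1 - β := by linarith [hβ.2]
  have hxpos : ∀ i, 0 < x i := by
    intro i
    induction i with
    | zero =>
      exact ENNReal.toReal_pos h0M.ne' (measure_ne_top _ _)
    | succ i ih => rw [hxrec i]; exact mul_pos hβ1 (mul_pos (hspos i) ih)
  have hypos : ∀ i, 0 < y i := by
    intro i
    induction i with
    | zero =>
      simp only [hy_def, hph_def, evol, Measure.dirac_apply' _ (measurableSet_singleton M)]
      simp
    | succ i ih => rw [hyrec i]; exact mul_pos hβ1 (mul_pos (htpos i) ih)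
  have hxley : ∀ i, x i ≤ y i := fun i => by
    have := hprob i; have := hprobh i
    rw [hx_def, hy_def]
    simp only
    rw [atom_toReal hM.le _ (hsupp i), atom_toReal hM.le _ (hsupph i)]
    have hIle : (ph i) (Set.Ico 0 M) ≤ (p i) (Set.Ico 0 M) := by
      have := Measure.le_iff'.mp (hcpl i) (Set.Ico 0 M)
      rwa [Measure.restrict_apply_self, Measure.restrict_apply_self] at this
    have := ENNReal.toReal_mono (measure_ne_top _ _) hIle
    linarith
  set ρ : ℕ → ℝ := fun i => x i / y i with hρ_def
  have hρ1 : ∀ i, ρ i ≤ 1 := fun i => div_le_one_of_le₀ (hxley i) (hypos i).le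
  have hρmono : Monotone ρ := by
    apply monotone_nat_of_le_succ
    intro i
    rw [hρ_def]
    simp only
    rw [div_le_div_iff₀ (hypos i) (hypos (i+1)), hxrec i, hyrec i]
    have h1 : t i * (x i * y i) ≤ s i * (x i * y i) := by
      apply mul_le_mul_of_nonneg_right (hts i)
      exact le_of_lt (mul_pos (hxpos i) (hypos i))
    nlinarith [hβ1]
  have hgood : ∀ i, ((ph i) (Set.Icc 0 a)).toReal + ε ≤ ((p i) (Set.Icc 0 a)).toReal →
      c * ρ i ≤ ρ (i+1) := by
    intro i hgap
    have := hprob i; have := hprobh i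
    have hcs : c * t i ≤ s i := hc (p i) (ph i) (hprob i) (hprobh i) (hsupp i) (hsupph i)
      (hcpl i) hgap
    rw [hρ_def]
    simp only
    rw [← mul_div_assoc, div_le_div_iff₀ (hypos i) (hypos (i+1)), hxrec i, hyrec i]
    have key := mul_le_mul_of_nonneg_right hcs
      (le_of_lt (mul_pos hβ1 (mul_pos (hxpos i) (hypos i))))
    nlinarith [key]
  have hρ0pos : 0 < ρ 0 := div_pos (hxpos 0) (hypos 0)
  have hgrow : ∀ k : ℕ, ∃ i, c ^ k * ρ 0 ≤ ρ i := by
    intro k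
    induction k with
    | zero => exact ⟨0, by simp⟩
    | succ k ih =>
      obtain ⟨i, hi⟩ := ih
      obtain ⟨j, hji, hjgap⟩ := hcon i
      refine ⟨j+1, ?_⟩
      have h1 : ρ i ≤ ρ j := hρmono hji
      have h2 : c * ρ j ≤ ρ (j+1) := hgood j hjgap
      calc c ^ (k+1) * ρ 0 = c * (c^k * ρ 0) := by ring
        _ ≤ c * ρ j := mul_le_mul_of_nonneg_left (hi.trans h1) (by linarith)
        _ ≤ ρ (j+1) := h2
  obtain ⟨k, hk⟩ := pow_unbounded_of_one_lt (1 / ρ 0) hc1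
  obtain ⟨i, hi⟩ := hgrow k
  have h1 : 1 < c ^ k * ρ 0 := by
    rw [div_lt_iff₀ hρ0pos] at hk
    linarith
  linarith [hρ1 i]

lemma tv_restrict (hM : 0 < M) (hβ : β ∈ Set.Ioo (0:ℝ) 1)
    [IsProbabilityMeasure q] [IsProbabilityMeasure p₀]
    (hq : q ((Set.Icc 0 M)ᶜ) = 0) (hp₀ : p₀ ((Set.Icc 0 M)ᶜ) = 0)
    (hw : ∀ x u, 0 ≤ w x u) (hwm : ∀ u, Measurable fun x => w x u)
    (hA1 : Assumption1 M w) (hA2 : Assumption2 M w)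
    (h0M : 0 < p₀ ({M} : Set ℝ)) (hqM : q ({M} : Set ℝ) = 0)
    {pstar : Measure ℝ}
    (hpstar : TendstoTV (evol w β q (MeasureTheory.Measure.dirac M)) pstar)
    {a : ℝ} (ha : 0 ≤ a) (haM : a < M) :
    TendstoTV (fun i => (evol w β q p₀ i).restrict (Set.Icc 0 a))
      (pstar.restrict (Set.Icc 0 a)) := by
  intro ε hε
  have hε2 : 0 < ε/2 := by linarith
  set ε' : ℝ := min (ε/2) (1/2) with hε'_def
  have hε'0 : 0 < ε' := lt_min hε2 (by norm_num)
  have hε'1 : ε' < 1 := lt_of_le_of_lt (min_le_right _ _) (by norm_num)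
  obtain ⟨N1, hN1⟩ := gap_to_zero (ε := ε') hM hβ hq hp₀ hw hwm hA1 hA2 h0M hqM ha haM hε'0 hε'1
  obtain ⟨N2, hN2⟩ := hpstar (ε/2) hε2
  refine ⟨max N1 N2, fun i hi A hA => ?_⟩
  set p : ℕ → Measure ℝ := evol w β q p₀ with hp_def
  set ph : ℕ → Measure ℝ := evol w β q (Measure.dirac M) with hph_def
  have hprob : ∀ j, IsProbabilityMeasure (p j) := evol_prob hw hwm hβ q p₀
  have hprobh : ∀ j, IsProbabilityMeasure (ph j) := evol_prob hw hwm hβ q (Measure.dirac M)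
  have hcpl : ∀ j, (ph j).restrict (Set.Ico 0 M) ≤ (p j).restrict (Set.Ico 0 M) :=
    coupling hM hβ hq hp₀ hw hwm hA1
  have hIcoSub : Set.Icc 0 a ⊆ Set.Ico 0 M := fun x hx => ⟨hx.1, lt_of_le_of_lt hx.2 haM⟩
  have hdom : ∀ (B : Set ℝ), MeasurableSet B → B ⊆ Set.Icc 0 a → (ph i) B ≤ (p i) B := by
    intro B hB hBsub
    have := Measure.le_iff.mp (hcpl i) B hB
    rwa [Measure.restrict_apply hB, Measure.restrict_apply hB,
      Set.inter_eq_self_of_subset_left (hBsub.trans hIcoSub)] at this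
  set B : Set ℝ := A ∩ Set.Icc 0 a with hB_def
  have hBm : MeasurableSet B := hA.inter measurableSet_Icc
  have hBsub : B ⊆ Set.Icc 0 a := Set.inter_subset_right
  have h2 : |((ph i) B).toReal - (pstar B).toReal| < ε/2 :=
    hN2 i (le_trans (le_max_right N1 N2) hi) B hBm
  have hgap : ((p i) (Set.Icc 0 a)).toReal - ((ph i) (Set.Icc 0 a)).toReal < ε/2 := by
    have := hN1 i (le_trans (le_max_left N1 N2) hi)
    have hmin : ε' ≤ ε/2 := min_le_left _ _
    simp only [hp_def, hph_def] at this ⊢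
    linarith
  have hkey : 0 ≤ ((p i) B).toReal - ((ph i) B).toReal ∧
      ((p i) B).toReal - ((ph i) B).toReal
        ≤ ((p i) (Set.Icc 0 a)).toReal - ((ph i) (Set.Icc 0 a)).toReal := by
    constructor
    · have := ENNReal.toReal_mono (measure_ne_top (p i) _) (hdom B hBm hBsub)
      linarith
    · have hDm : MeasurableSet (Set.Icc 0 a \ A) := measurableSet_Icc.diff hA
      have hDdom := ENNReal.toReal_mono (measure_ne_top (p i) _)
        (hdom _ hDm Set.diff_subset)
      have hsplitp : ((p i) (Set.Icc 0 a)).toReal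
          = ((p i) B).toReal + ((p i) (Set.Icc 0 a \ A)).toReal := by
        rw [← ENNReal.toReal_add (measure_ne_top _ _) (measure_ne_top _ _)]
        congr 1
        rw [Set.inter_comm] at hB_def
        rw [hB_def, measure_inter_add_diff _ hA]
      have hsplitph : ((ph i) (Set.Icc 0 a)).toReal
          = ((ph i) B).toReal + ((ph i) (Set.Icc 0 a \ A)).toReal := by
        rw [← ENNReal.toReal_add (measure_ne_top _ _) (measure_ne_top _ _)]
        congr 1
        rw [Set.inter_comm] at hB_def
        rw [hB_def, measure_inter_add_diff _ hA]
      linarith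
  rw [Measure.restrict_apply hA, Measure.restrict_apply hA]
  rw [abs_lt] at h2 ⊢
  obtain ⟨hk1, hk2⟩ := hkey
  constructor <;> simp only [hp_def] at * <;> [linarith; linarith]

lemma pstar_supp (hM : 0 < M) {pstar : Measure ℝ} [IsProbabilityMeasure pstar]
    [IsProbabilityMeasure q]
    (hq : q ((Set.Icc 0 M)ᶜ) = 0)
    (hpstar : TendstoTV (evol w β q (MeasureTheory.Measure.dirac M)) pstar) :
    pstar ((Set.Icc 0 M)ᶜ) = 0 := by
  have h0 : ∀ ε : ℝ, 0 < ε → (pstar ((Set.Icc 0 M)ᶜ)).toReal < ε := by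
    intro ε hε
    obtain ⟨N, hN⟩ := hpstar ε hε
    have := hN N le_rfl ((Set.Icc 0 M)ᶜ) measurableSet_Icc.compl
    rw [evol_supp hq (dirac_supp hM.le) N, ENNReal.toReal_zero, zero_sub, abs_neg,
      abs_of_nonneg ENNReal.toReal_nonneg] at this
    exact this
  have ht : (pstar ((Set.Icc 0 M)ᶜ)).toReal = 0 := by
    by_contra h
    have hpos : 0 < (pstar ((Set.Icc 0 M)ᶜ)).toReal :=
      lt_of_le_of_ne ENNReal.toReal_nonneg (Ne.symm h)
    exact lt_irrefl _ (h0 _ hpos)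
  rcases (ENNReal.toReal_eq_zero_iff _).mp ht with h | h
  · exact h
  · exact absurd h (measure_ne_top _ _)

lemma weak_conv (hM : 0 < M) (hβ : β ∈ Set.Ioo (0:ℝ) 1)
    [IsProbabilityMeasure q] [IsProbabilityMeasure p₀]
    (hq : q ((Set.Icc 0 M)ᶜ) = 0) (hp₀ : p₀ ((Set.Icc 0 M)ᶜ) = 0)
    (hw : ∀ x u, 0 ≤ w x u) (hwm : ∀ u, Measurable fun x => w x u)
    (hA1 : Assumption1 M w) (hA2 : Assumption2 M w)
    (h0M : 0 < p₀ ({M} : Set ℝ)) (hqM : q ({M} : Set ℝ) = 0)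
    {pstar : Measure ℝ} [IsProbabilityMeasure pstar]
    (hpstar : TendstoTV (evol w β q (MeasureTheory.Measure.dirac M)) pstar) :
    TendstoWeak (evol w β q p₀) pstar := by
  set p : ℕ → Measure ℝ := evol w β q p₀ with hp_def
  have hprob : ∀ j, IsProbabilityMeasure (p j) := evol_prob hw hwm hβ q p₀
  have hsupp : ∀ j, (p j) ((Set.Icc 0 M)ᶜ) = 0 := evol_supp hq hp₀
  have hps : pstar ((Set.Icc 0 M)ᶜ) = 0 := pstar_supp hM hq hpstar
  -- convergence on sets of the form G ∩ Icc 0 a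
  have hconv : ∀ G : Set ℝ, MeasurableSet G → ∀ a : ℝ, 0 ≤ a → a < M →
      Tendsto (fun i => ((p i) (G ∩ Set.Icc 0 a)).toReal) atTop
        (nhds ((pstar (G ∩ Set.Icc 0 a)).toReal)) := by
    intro G hG a ha haM
    have htv := tv_restrict hM hβ hq hp₀ hw hwm hA1 hA2 h0M hqM hpstar ha haM
    rw [Metric.tendsto_atTop]
    intro ε hε
    obtain ⟨N, hN⟩ := htv ε hε
    refine ⟨N, fun i hi => ?_⟩
    have := hN i hi G hG
    rw [Measure.restrict_apply hG, Measure.restrict_apply hG] at this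
    rw [Real.dist_eq]
    exact this
  have hIccone : ∀ (u : Measure ℝ), IsProbabilityMeasure u → u ((Set.Icc 0 M)ᶜ) = 0 →
      ∀ a : ℝ, 0 ≤ a → a < M →
      (u (Set.Ioc a M)).toReal = 1 - (u (Set.Icc 0 a)).toReal := by
    intro u hu hsu a ha haM
    have hdisj : Disjoint (Set.Icc (0:ℝ) a) (Set.Ioc a M) :=
      Set.disjoint_left.mpr fun x hx hx' => absurd hx'.1 (not_lt.mpr hx.2)
    have hunion : Set.Icc (0:ℝ) a ∪ Set.Ioc a M = Set.Icc 0 M :=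
      Set.Icc_union_Ioc_eq_Icc ha haM.le
    have h1 : u (Set.Icc 0 a) + u (Set.Ioc a M) = 1 := by
      rw [← measure_union hdisj measurableSet_Ioc, hunion, supp_Icc_one hM.le u hsu]
    have h2 : (u (Set.Icc 0 a)).toReal + (u (Set.Ioc a M)).toReal = 1 := by
      rw [← ENNReal.toReal_add (measure_ne_top _ _) (measure_ne_top _ _), h1]; simp
    linarith
  have hconvIoc : ∀ a : ℝ, 0 ≤ a → a < M →
      Tendsto (fun i => ((p i) (Set.Ioc a M)).toReal) atTop
        (nhds ((pstar (Set.Ioc a M)).toReal)) := by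
    intro a ha haM
    have h1 := hconv Set.univ MeasurableSet.univ a ha haM
    simp only [Set.univ_inter] at h1
    have h2 : ∀ i, ((p i) (Set.Ioc a M)).toReal = 1 - ((p i) (Set.Icc 0 a)).toReal :=
      fun i => hIccone (p i) (hprob i) (hsupp i) a ha haM
    have h3 : (pstar (Set.Ioc a M)).toReal = 1 - (pstar (Set.Icc 0 a)).toReal :=
      hIccone pstar inferInstance hps a ha haM
    simp only [h2, h3]
    exact Tendsto.const_sub 1 h1
  -- Claim E
  have hE : ∀ G : Set ℝ, IsOpen G → ∀ r : ℝ, r < (pstar G).toReal →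
      ∀ᶠ i in atTop, r ≤ ((p i) G).toReal := by
    intro G hG r hr
    set δ : ℝ := (pstar G).toReal - r with hδ_def
    have hδ : 0 < δ := by simp only [hδ_def]; linarith
    by_cases hMG : M ∈ G
    · obtain ⟨rr, hrr0, hball⟩ := Metric.isOpen_iff.mp hG M hMG
      set a : ℝ := max 0 (M - rr/2) with ha_def
      have ha0 : 0 ≤ a := le_max_left _ _
      have haM : a < M := max_lt hM (by linarith)
      have hIocG : Set.Ioc a M ⊆ G := by
        intro x hx
        apply hball
        rw [Metric.mem_ball, Real.dist_eq, abs_of_nonpos (by linarith [hx.2])]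
        have : M - rr/2 ≤ a := le_max_right _ _
        have := hx.1
        linarith
      have hub : (pstar G).toReal ≤ (pstar (G ∩ Set.Icc 0 a)).toReal
          + (pstar (Set.Ioc a M)).toReal := by
        have hcover : G ⊆ (G ∩ Set.Icc 0 a) ∪ (Set.Ioc a M ∪ (Set.Icc 0 M)ᶜ) := by
          intro x hx
          by_cases hxI : x ∈ Set.Icc 0 M
          · by_cases hxa : x ≤ a
            · exact Or.inl ⟨hx, hxI.1, hxa⟩
            · exact Or.inr (Or.inl ⟨not_le.mp hxa, hxI.2⟩)
          · exact Or.inr (Or.inr hxI)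
        have h1 : pstar G ≤ pstar (G ∩ Set.Icc 0 a) + (pstar (Set.Ioc a M) +
            pstar ((Set.Icc 0 M)ᶜ)) :=
          le_trans (measure_mono hcover)
            (le_trans (measure_union_le _ _) (by gcongr; exact measure_union_le _ _))
        rw [hps, add_zero] at h1
        have := ENNReal.toReal_mono (by
          exact ENNReal.add_ne_top.mpr ⟨measure_ne_top _ _, measure_ne_top _ _⟩) h1
        rwa [ENNReal.toReal_add (measure_ne_top _ _) (measure_ne_top _ _)] at this
      have hev1 := Metric.tendsto_atTop.mp (hconv G hG.measurableSet a ha0 haM) (δ/2)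
        (by linarith)
      have hev2 := Metric.tendsto_atTop.mp (hconvIoc a ha0 haM) (δ/2) (by linarith)
      obtain ⟨N1, hN1⟩ := hev1
      obtain ⟨N2, hN2⟩ := hev2
      rw [eventually_atTop]
      refine ⟨max N1 N2, fun i hi => ?_⟩
      have h1 := hN1 i (le_trans (le_max_left _ _) hi)
      have h2 := hN2 i (le_trans (le_max_right _ _) hi)
      rw [Real.dist_eq, abs_lt] at h1 h2
      have hsum : ((p i) (G ∩ Set.Icc 0 a)).toReal + ((p i) (Set.Ioc a M)).toReal
          ≤ ((p i) G).toReal := by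
        have hdisj : Disjoint (G ∩ Set.Icc 0 a) (Set.Ioc a M) :=
          Set.disjoint_left.mpr fun x hx hx' => absurd hx'.1 (not_lt.mpr hx.2.2)
        have hU : (p i) (G ∩ Set.Icc 0 a) + (p i) (Set.Ioc a M)
            = (p i) ((G ∩ Set.Icc 0 a) ∪ Set.Ioc a M) :=
          (measure_union hdisj measurableSet_Ioc).symm
        have hmono := ENNReal.toReal_mono (measure_ne_top _ _)
          (measure_mono (Set.union_subset Set.inter_subset_left hIocG)
            (μ := p i) (s := (G ∩ Set.Icc 0 a) ∪ Set.Ioc a M))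
        rw [← hU, ENNReal.toReal_add (measure_ne_top _ _) (measure_ne_top _ _)] at hmono
        exact hmono
      linarith
    · -- M ∉ G
      set an : ℕ → ℝ := fun n => M - M/(n+1) with han_def
      have han0 : ∀ n, 0 ≤ an n := by
        intro n
        have h1 : M / ((n:ℝ)+1) ≤ M / 1 := by
          apply div_le_div_of_nonneg_left hM.le one_pos
          linarith [Nat.cast_nonneg (α := ℝ) n]
        rw [div_one] at h1
        simp only [han_def]; linarith
      have hanM : ∀ n, an n < M := by
        intro n
        have : 0 < M / ((n:ℝ)+1) := by positivity
        simp only [han_def]; linarith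
      have hanmono : Monotone an := by
        intro m n hmn
        simp only [han_def]
        have : M / ((n:ℝ)+1) ≤ M / ((m:ℝ)+1) := by
          apply div_le_div_of_nonneg_left hM.le (by positivity)
          have : (m:ℝ) ≤ n := Nat.cast_le.mpr hmn
          linarith
        linarith
      have hunion : (⋃ n, G ∩ Set.Icc 0 (an n)) = G ∩ Set.Ico 0 M := by
        apply Set.Subset.antisymm
        · refine Set.iUnion_subset fun n => ?_
          exact Set.inter_subset_inter_right G (fun x hx => ⟨hx.1, lt_of_le_of_lt hx.2 (hanM n)⟩)
        · rintro x ⟨hxG, hx0, hxM⟩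
          obtain ⟨n, hn⟩ := exists_nat_gt (M / (M - x))
          refine Set.mem_iUnion.mpr ⟨n, hxG, hx0, ?_⟩
          have hMx : 0 < M - x := by linarith
          have hn1 : M / (M - x) < (n:ℝ) + 1 := by linarith
          have : M / ((n:ℝ)+1) < M - x := by
            rw [div_lt_iff₀ (by positivity)] at hn1 ⊢
            · nlinarith
          simp only [han_def]; linarith
      have hGIco : pstar G = pstar (G ∩ Set.Ico 0 M) := by
        apply le_antisymm
        · have hcover : G ⊆ (G ∩ Set.Ico 0 M) ∪ (Set.Icc 0 M)ᶜ := by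
            intro x hx
            by_cases hxI : x ∈ Set.Icc 0 M
            · exact Or.inl ⟨hx, hxI.1, lt_of_le_of_ne hxI.2 (fun h => hMG (h ▸ hx))⟩
            · exact Or.inr hxI
          calc pstar G ≤ pstar (G ∩ Set.Ico 0 M) + pstar ((Set.Icc 0 M)ᶜ) :=
                le_trans (measure_mono hcover) (measure_union_le _ _)
            _ = pstar (G ∩ Set.Ico 0 M) := by rw [hps, add_zero]
        · exact measure_mono Set.inter_subset_left
      have htd : Tendsto (fun n => pstar (G ∩ Set.Icc 0 (an n))) atTop
          (nhds (pstar (G ∩ Set.Ico 0 M))) := by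
        rw [← hunion]
        exact tendsto_measure_iUnion_atTop
          (fun m n hmn => Set.inter_subset_inter_right G (Set.Icc_subset_Icc_right
            (hanmono hmn)))
      have htdR : Tendsto (fun n => (pstar (G ∩ Set.Icc 0 (an n))).toReal) atTop
          (nhds ((pstar (G ∩ Set.Ico 0 M)).toReal)) :=
        (ENNReal.tendsto_toReal (measure_ne_top _ _)).comp htd
      obtain ⟨n, hn⟩ := (Metric.tendsto_atTop.mp htdR (δ/2) (by linarith)).imp
        (fun n h => h n le_rfl)
      rw [Real.dist_eq, abs_lt] at hn
      have hev := Metric.tendsto_atTop.mp (hconv G hG.measurableSet (an n) (han0 n)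
        (hanM n)) (δ/2) (by linarith)
      obtain ⟨N, hN⟩ := hev
      rw [eventually_atTop]
      refine ⟨N, fun i hi => ?_⟩
      have h1 := hN i hi
      rw [Real.dist_eq, abs_lt] at h1
      have hmono := ENNReal.toReal_mono (measure_ne_top (p i) _)
        (measure_mono (Set.inter_subset_left (s := G) (t := Set.Icc 0 (an n))))
      have hGr : (pstar (G ∩ Set.Ico 0 M)).toReal = (pstar G).toReal := by rw [← hGIco]
      linarith
  -- portmanteau
  intro f
  set P : ℕ → ProbabilityMeasure ℝ := fun i => ⟨p i, hprob i⟩ with hP_def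
  set Ps : ProbabilityMeasure ℝ := ⟨pstar, inferInstance⟩ with hPs_def
  have hP : Tendsto P atTop (nhds Ps) := by
    apply MeasureTheory.tendsto_of_forall_isOpen_le_liminf
    intro G hGopen
    refine le_of_forall_lt fun r hrlt => ?_
    obtain ⟨r', hr1, hr2⟩ := exists_between hrlt
    have hr'lt : (r' : ℝ) < (pstar G).toReal := by
      have h := NNReal.coe_lt_coe.mpr hr2
      simpa [hPs_def, ProbabilityMeasure.mk_apply, ENNReal.coe_toNNReal_eq_toReal] using h
    have hev : ∀ᶠ i in atTop, r' ≤ P i G := by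
      filter_upwards [hE G hGopen (r' : ℝ) hr'lt] with i hi
      refine NNReal.coe_le_coe.mp ?_
      simpa [hP_def, ProbabilityMeasure.mk_apply, ENNReal.coe_toNNReal_eq_toReal] using hi
    have hcob : IsCoboundedUnder (· ≥ ·) atTop (fun i => P i G) :=
      IsBoundedUnder.isCoboundedUnder_ge ⟨1, Filter.eventually_map.mpr
        (Filter.Eventually.of_forall fun i => ProbabilityMeasure.apply_le_one _ _)⟩
    exact lt_of_lt_of_le hr1 (le_liminf_of_le hcob hev)
  exact ProbabilityMeasure.tendsto_iff_forall_integral_tendsto.mp hP f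


/-- Theorem 7 of the paper. Under Assumptions 1 and 2, if
`0 < p₀({M}) < 1` and `q({M}) = 0`, then for every `0 ≤ a < M` the restrictions
`(p_i)_{[0,a]}` converge in total variation to `(p*)_{[0,a]}`; consequently `(p_i)`
converges weakly to `p*`. -/
theorem stmt2 (M : ℝ) (hM : 0 < M) (β : ℝ) (hβ : β ∈ Set.Ioo (0:ℝ) 1)
    (q : MeasureTheory.Measure ℝ) [IsProbabilityMeasure q] (hq : q ((Set.Icc 0 M)ᶜ) = 0)
    (w : ℝ → MeasureTheory.Measure ℝ → ℝ)
    (hw_nonneg : ∀ x u, 0 ≤ w x u)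
    (hw_meas : ∀ u, Measurable fun x => w x u)
    (hA1 : Assumption1 M w) (hA2 : Assumption2 M w)
    (pstar : MeasureTheory.Measure ℝ) [IsProbabilityMeasure pstar]
    (hpstar : TendstoTV (evol w β q (MeasureTheory.Measure.dirac M)) pstar)
    (p₀ : MeasureTheory.Measure ℝ) [IsProbabilityMeasure p₀]
    (hp₀ : p₀ ((Set.Icc 0 M)ᶜ) = 0)
    (h0M : 0 < p₀ ({M} : Set ℝ)) (h1M : p₀ ({M} : Set ℝ) < 1)
    (hqM : q ({M} : Set ℝ) = 0) :
    (∀ a : ℝ, 0 ≤ a → a < M →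
      TendstoTV (fun i => (evol w β q p₀ i).restrict (Set.Icc 0 a))
        (pstar.restrict (Set.Icc 0 a))) ∧
    TendstoWeak (evol w β q p₀) pstar := by
  refine ⟨fun a ha haM => tv_restrict hM hβ hq hp₀ hw_nonneg hw_meas hA1 hA2 h0M hqM hpstar ha haM, ?_⟩
  exact weak_conv hM hβ hq hp₀ hw_nonneg hw_meas hA1 hA2 h0M hqM hpstar
end Main
end

section
/- Under Assumption 1, for any initial distribution p₀ ∈ P(𝓜) and any mutant distribution q ∈ P(𝓜): if p_i({M}) converges to p*({M}) as i → ∞, then (p_i)_{i≥0} converges in total variation to p*. -/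
open MeasureTheory Set Filter

lemma sel_meas (w : ℝ → Measure ℝ → ℝ) (hw_meas : ∀ u, Measurable fun x => w x u)
    (u : Measure ℝ) : Measurable (sel w u) := by
  unfold sel
  split
  · exact (hw_meas u).div_const _
  · exact measurable_const

lemma lint_sel (w : ℝ → Measure ℝ → ℝ) (hw_nonneg : ∀ x u, 0 ≤ w x u) (hw_meas : ∀ u, Measurable fun x => w x u)
    (u : Measure ℝ) (hu : u univ = 1) :
    ∫⁻ x, ENNReal.ofReal (sel w u x) ∂u = 1 := by
  by_cases h : 0 < ∫ y, w y u ∂u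
  · have hint : Integrable (fun y => w y u) u := by
      by_contra hni
      rw [integral_undef hni] at h; exact lt_irrefl 0 h
    have hI : ∫⁻ x, ENNReal.ofReal (w x u) ∂u = ENNReal.ofReal (∫ y, w y u ∂u) :=
      (MeasureTheory.ofReal_integral_eq_lintegral_ofReal hint
        (ae_of_all _ fun x => hw_nonneg x u)).symm
    simp only [sel, if_pos h]
    calc ∫⁻ x, ENNReal.ofReal (w x u / ∫ y, w y u ∂u) ∂u
        = ∫⁻ x, ENNReal.ofReal (w x u) / ENNReal.ofReal (∫ y, w y u ∂u) ∂u := by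
          simp_rw [ENNReal.ofReal_div_of_pos h]
      _ = (∫⁻ x, ENNReal.ofReal (w x u) ∂u) / ENNReal.ofReal (∫ y, w y u ∂u) := by
          simp_rw [div_eq_mul_inv]
          exact lintegral_mul_const'' _ ((ENNReal.measurable_ofReal.comp (hw_meas u)).aemeasurable)
      _ = 1 := by
          rw [hI]
          exact ENNReal.div_self (by simp [h]) (by simp)
  · simp only [sel, if_neg h]
    simp [hu]

lemma evol_spec (M : ℝ) (β : ℝ) (hβ : β ∈ Set.Ioo (0:ℝ) 1)
    (q : Measure ℝ) [IsProbabilityMeasure q] (hq : q ((Icc 0 M)ᶜ) = 0)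
    (w : ℝ → Measure ℝ → ℝ) (hw_nonneg : ∀ x u, 0 ≤ w x u)
    (hw_meas : ∀ u, Measurable fun x => w x u)
    (p₀ : Measure ℝ) (hp₀1 : p₀ univ = 1) (hp₀ : p₀ ((Icc 0 M)ᶜ) = 0) :
    ∀ i, (evol w β q p₀ i) univ = 1 ∧ (evol w β q p₀ i) ((Icc 0 M)ᶜ) = 0 := by
  intro i
  induction i with
  | zero => exact ⟨hp₀1, hp₀⟩
  | succ i ih =>
    obtain ⟨h1, h2⟩ := ih
    constructor
    · show (ENNReal.ofReal (1-β) • _ + ENNReal.ofReal β • q) univ = 1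
      rw [Measure.add_apply, Measure.smul_apply, Measure.smul_apply, smul_eq_mul, smul_eq_mul,
        withDensity_apply _ MeasurableSet.univ, Measure.restrict_univ,
        lint_sel w hw_nonneg hw_meas _ h1, measure_univ, mul_one, mul_one,
        ← ENNReal.ofReal_add (by linarith [hβ.2]) (le_of_lt hβ.1)]
      norm_num
    · show (ENNReal.ofReal (1-β) • _ + ENNReal.ofReal β • q) ((Icc 0 M)ᶜ) = 0
      rw [Measure.add_apply, Measure.smul_apply, Measure.smul_apply, smul_eq_mul, smul_eq_mul,
        withDensity_apply _ measurableSet_Icc.compl, Measure.restrict_eq_zero.mpr h2,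
        lintegral_zero_measure, hq]
      simp

lemma evol_mono (M : ℝ) (hM : 0 < M) (β : ℝ) (hβ : β ∈ Set.Ioo (0:ℝ) 1)
    (q : Measure ℝ) [IsProbabilityMeasure q] (hq : q ((Icc 0 M)ᶜ) = 0)
    (w : ℝ → Measure ℝ → ℝ) (hw_nonneg : ∀ x u, 0 ≤ w x u)
    (hw_meas : ∀ u, Measurable fun x => w x u) (hA1 : Assumption1 M w)
    (p₀ : Measure ℝ) (hp₀1 : p₀ univ = 1) (hp₀ : p₀ ((Icc 0 M)ᶜ) = 0) :
    ∀ i, (evol w β q (Measure.dirac M) i).restrict (Ico 0 M)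
        ≤ (evol w β q p₀ i).restrict (Ico 0 M) := by
  have hdc : (Measure.dirac M) ((Icc 0 M)ᶜ) = 0 := by
    rw [Measure.dirac_apply' _ measurableSet_Icc.compl]
    simp [hM.le]
  have hspec := evol_spec M β hβ q hq w hw_nonneg hw_meas p₀ hp₀1 hp₀
  have hspecd := evol_spec M β hβ q hq w hw_nonneg hw_meas (Measure.dirac M)
    (by simp) hdc
  intro i
  induction i with
  | zero =>
    have hz : (Measure.dirac M).restrict (Ico 0 M) = 0 := by
      rw [Measure.restrict_eq_zero, Measure.dirac_apply' _ measurableSet_Ico]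
      simp
    show (Measure.dirac M).restrict (Ico 0 M) ≤ p₀.restrict (Ico 0 M)
    rw [hz]; exact Measure.zero_le _
  | succ i ih =>
    set ph := evol w β q (Measure.dirac M) i with hph
    set p := evol w β q p₀ i with hp
    have hsel : ∀ x ∈ Icc (0:ℝ) M, sel w ph x ≤ sel w p x :=
      hA1 p ph ⟨(hspec i).1⟩ ⟨(hspecd i).1⟩ (hspec i).2 (hspecd i).2 ih
    rw [Measure.le_iff]
    intro s hs
    rw [Measure.restrict_apply hs, Measure.restrict_apply hs]
    have hsm : MeasurableSet (s ∩ Ico 0 M) := hs.inter measurableSet_Ico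
    show (ENNReal.ofReal (1-β) • ph.withDensity (fun x => ENNReal.ofReal (sel w ph x))
        + ENNReal.ofReal β • q) (s ∩ Ico 0 M)
      ≤ (ENNReal.ofReal (1-β) • p.withDensity (fun x => ENNReal.ofReal (sel w p x))
        + ENNReal.ofReal β • q) (s ∩ Ico 0 M)
    simp only [Measure.add_apply, Measure.smul_apply, smul_eq_mul,
      withDensity_apply _ hsm]
    refine add_le_add_left (mul_le_mul_right ?_ _) _
    calc ∫⁻ x in s ∩ Ico 0 M, ENNReal.ofReal (sel w ph x) ∂ph
        ≤ ∫⁻ x in s ∩ Ico 0 M, ENNReal.ofReal (sel w p x) ∂ph := by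
          refine setLIntegral_mono (ENNReal.measurable_ofReal.comp (sel_meas w hw_meas p))
            (fun x hx => ENNReal.ofReal_le_ofReal (hsel x ⟨hx.2.1, le_of_lt hx.2.2⟩))
      _ ≤ ∫⁻ x in s ∩ Ico 0 M, ENNReal.ofReal (sel w p x) ∂p := by
          refine lintegral_mono' ?_ le_rfl
          have h1 : ph.restrict (s ∩ Ico 0 M) = (ph.restrict (Ico 0 M)).restrict s := by
            rw [Measure.restrict_restrict hs]
          have h2 : p.restrict (s ∩ Ico 0 M) = (p.restrict (Ico 0 M)).restrict s := by
            rw [Measure.restrict_restrict hs]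
          rw [h1, h2]
          exact Measure.restrict_mono subset_rfl ih

lemma key_bound (M : ℝ) (hM : 0 < M) (p h : Measure ℝ)
    (hp1 : p univ = 1) (hh1 : h univ = 1)
    (hp2 : p ((Icc 0 M)ᶜ) = 0) (hh2 : h ((Icc 0 M)ᶜ) = 0)
    (hle : h.restrict (Ico 0 M) ≤ p.restrict (Ico 0 M))
    (A : Set ℝ) (hA : MeasurableSet A) :
    |(p A).toReal - (h A).toReal| ≤ (h {M}).toReal - (p {M}).toReal := by
  haveI : IsProbabilityMeasure p := ⟨hp1⟩
  haveI : IsProbabilityMeasure h := ⟨hh1⟩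
  have hIcc : Ico (0:ℝ) M ∪ {M} = Icc 0 M := Ico_union_right hM.le
  have hdisj : ∀ B : Set ℝ, Disjoint (B ∩ Ico 0 M) (B ∩ {M}) := by
    intro B
    refine Set.disjoint_left.mpr fun x hx1 hx2 => ?_
    have := hx2.2; simp only [mem_singleton_iff] at this
    exact absurd (this ▸ hx1.2).2 (lt_irrefl M)
  -- decomposition of a measure of a set
  have hdec : ∀ (μ : Measure ℝ), μ univ = 1 → μ ((Icc 0 M)ᶜ) = 0 → ∀ B : Set ℝ, MeasurableSet B →
      (μ B).toReal = (μ (B ∩ Ico 0 M)).toReal + (μ (B ∩ {M})).toReal := by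
    intro μ hμ1 hμ B hB
    haveI : IsProbabilityMeasure μ := ⟨hμ1⟩
    have h1 : μ B = μ (B ∩ Icc 0 M) := by
      have : μ (B \ Icc 0 M) = 0 :=
        measure_mono_null (fun x hx => hx.2) hμ
      rw [← measure_inter_add_diff B measurableSet_Icc, this, add_zero]
    have h2 : B ∩ Icc 0 M = (B ∩ Ico 0 M) ∪ (B ∩ {M}) := by
      rw [← inter_union_distrib_left, hIcc]
    rw [h1, h2, measure_union (hdisj B) (hB.inter (measurableSet_singleton M)),
      ENNReal.toReal_add (measure_ne_top μ _) (measure_ne_top μ _)]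
  -- restriction inequality in real form
  have hres : ∀ B : Set ℝ, MeasurableSet B →
      (h (B ∩ Ico 0 M)).toReal ≤ (p (B ∩ Ico 0 M)).toReal := by
    intro B hB
    have := Measure.le_iff'.1 hle B
    rw [Measure.restrict_apply hB, Measure.restrict_apply hB] at this
    exact ENNReal.toReal_mono (measure_ne_top p _) this
  -- masses of Ico
  have hIcoMass : ∀ (μ : Measure ℝ), μ univ = 1 → μ ((Icc 0 M)ᶜ) = 0 →
      (μ (Ico 0 M)).toReal = 1 - (μ {M}).toReal := by
    intro μ h1 h2
    have := hdec μ h1 h2 univ MeasurableSet.univ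
    simp only [univ_inter] at this
    rw [h1] at this
    simp only [ENNReal.toReal_one] at this
    linarith
  -- partition Ico into A-part and complement part
  have hpart : ∀ (μ : Measure ℝ), μ univ = 1 →
      (μ (Ico 0 M)).toReal = (μ (A ∩ Ico 0 M)).toReal + (μ (Aᶜ ∩ Ico 0 M)).toReal := by
    intro μ hμ1
    haveI : IsProbabilityMeasure μ := ⟨hμ1⟩
    have hu : (A ∩ Ico 0 M) ∪ (Aᶜ ∩ Ico 0 M) = Ico 0 M := by
      rw [← union_inter_distrib_right, union_compl_self, univ_inter]
    have hd : Disjoint (A ∩ Ico 0 M) (Aᶜ ∩ Ico 0 M) :=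
      Disjoint.mono inter_subset_left inter_subset_left disjoint_compl_right
    have hmu := measure_union (μ := μ) hd (hA.compl.inter measurableSet_Ico)
    rw [hu] at hmu
    rw [hmu, ENNReal.toReal_add (measure_ne_top μ _) (measure_ne_top μ _)]
  have kA := hres A hA
  have kAc := hres Aᶜ hA.compl
  have hIp := hIcoMass p hp1 hp2
  have hIh := hIcoMass h hh1 hh2
  have hPp := hpart p hp1
  have hPh := hpart h hh1
  have hdecp := hdec p hp1 hp2 A hA
  have hdech := hdec h hh1 hh2 A hA
  rw [abs_le]
  by_cases hMA : M ∈ A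
  · have hAM : A ∩ {M} = {M} := by
      ext x; simp only [mem_inter_iff, mem_singleton_iff]
      exact ⟨fun hx => hx.2, fun hx => ⟨hx ▸ hMA, hx⟩⟩
    rw [hAM] at hdecp hdech
    constructor <;> linarith
  · have hAM : A ∩ {M} = ∅ := by
      ext x; simp only [mem_inter_iff, mem_singleton_iff, mem_empty_iff_false, iff_false,
        not_and]
      intro hx hxM; exact hMA (hxM ▸ hx)
    rw [hAM] at hdecp hdech
    simp only [measure_empty, ENNReal.toReal_zero] at hdecp hdech
    constructor <;> linarith

/-- Proposition 4 of the paper. Under Assumption 1, for any `p₀`, `q`: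
if `p_i({M}) → p*({M})`, then `(p_i)` converges in total variation to `p*`. -/
theorem stmt7 (M : ℝ) (hM : 0 < M) (β : ℝ) (hβ : β ∈ Set.Ioo (0:ℝ) 1)
    (q : MeasureTheory.Measure ℝ) [IsProbabilityMeasure q] (hq : q ((Set.Icc 0 M)ᶜ) = 0)
    (w : ℝ → MeasureTheory.Measure ℝ → ℝ)
    (hw_nonneg : ∀ x u, 0 ≤ w x u)
    (hw_meas : ∀ u, Measurable fun x => w x u)
    (hA1 : Assumption1 M w)
    (pstar : MeasureTheory.Measure ℝ) [IsProbabilityMeasure pstar]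
    (hpstar : TendstoTV (evol w β q (MeasureTheory.Measure.dirac M)) pstar)
    (p₀ : MeasureTheory.Measure ℝ) [IsProbabilityMeasure p₀]
    (hp₀ : p₀ ((Set.Icc 0 M)ᶜ) = 0)
    (hconv : Filter.Tendsto (fun i => (evol w β q p₀ i) ({M} : Set ℝ)) Filter.atTop
      (nhds (pstar ({M} : Set ℝ)))) :
    TendstoTV (evol w β q p₀) pstar := by
  intro ε hε
  have hdc : (Measure.dirac M) ((Icc 0 M)ᶜ) = 0 := by
    rw [Measure.dirac_apply' _ measurableSet_Icc.compl]
    simp [hM.le]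
  have hspec := evol_spec M β hβ q hq w hw_nonneg hw_meas p₀ measure_univ hp₀
  have hspecd := evol_spec M β hβ q hq w hw_nonneg hw_meas (Measure.dirac M) (by simp) hdc
  have hmono := evol_mono M hM β hβ q hq w hw_nonneg hw_meas hA1 p₀ measure_univ hp₀
  obtain ⟨N₁, hN₁⟩ := hpstar (ε/4) (by linarith)
  obtain ⟨N₂, hN₂⟩ := hpstar (ε/8) (by linarith)
  have hconv' : Tendsto (fun i => ((evol w β q p₀ i) {M}).toReal) atTop
      (nhds ((pstar {M}).toReal)) :=
    (ENNReal.tendsto_toReal (measure_ne_top pstar {M})).comp hconv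
  obtain ⟨N₃, hN₃⟩ := (Metric.tendsto_atTop.mp hconv') (ε/8) (by linarith)
  refine ⟨max N₁ (max N₂ N₃), fun i hi A hA => ?_⟩
  have hi₁ : N₁ ≤ i := le_trans (le_max_left _ _) hi
  have hi₂ : N₂ ≤ i := le_trans (le_trans (le_max_left _ _) (le_max_right _ _)) hi
  have hi₃ : N₃ ≤ i := le_trans (le_trans (le_max_right _ _) (le_max_right _ _)) hi
  have hkey := key_bound M hM (evol w β q p₀ i) (evol w β q (Measure.dirac M) i)
    (hspec i).1 (hspecd i).1 (hspec i).2 (hspecd i).2 (hmono i) A hA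
  have h1 := hN₂ i hi₂ {M} (measurableSet_singleton M)
  have h2 := hN₃ i hi₃
  rw [Real.dist_eq] at h2
  have h4 := hN₁ i hi₁ A hA
  have t1 := abs_sub_le ((evol w β q p₀ i A).toReal)
    ((evol w β q (Measure.dirac M) i A).toReal) ((pstar A).toReal)
  have e1 : (evol w β q (Measure.dirac M) i {M}).toReal - (pstar {M}).toReal
      ≤ |(evol w β q (Measure.dirac M) i {M}).toReal - (pstar {M}).toReal| := le_abs_self _
  have e2 : (pstar {M}).toReal - (evol w β q p₀ i {M}).toReal
      ≤ |(evol w β q p₀ i {M}).toReal - (pstar {M}).toReal| := by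
    rw [abs_sub_comm]; exact le_abs_self _
  linarith
end
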